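/- arXiv:2112.03741 — 3 statements merged into one kernel-verified Lean document; each statement's English description precedes it below -/
import Mathlib

section
/- Let N be a positive integer and let d, d' be positive divisors of N. Then the rational number a_N(d,d') := (N / gcd(d, N/d)) · gcd(d,d')^2 / (d·d') is a positive integer; equivalently, gcd(d, N/d) · d · d' divides N · gcd(d,d')^2. -/
/-- For a positive integer `N` and divisors `d, d'` of `N`, the quantity
`a_N(d,d') = (N/gcd(d,N/d)) · gcd(d,d')^2/(d·d')` is a positive integer;
equivalently `gcd(d,N/d)·d·d'` divides `N·gcd(d,d')^2`. -/
theorem stmt_0 (N d d' : ℕ) (hN : 0 < N) (hd : d ∣ N) (hd' : d' ∣ N) :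
    (∃ a : ℕ, 0 < a ∧
      (a : ℚ) = ((N : ℚ) / (Nat.gcd d (N / d) : ℚ)) *
        ((Nat.gcd d d' : ℚ) ^ 2 / ((d : ℚ) * (d' : ℚ)))) ∧
    Nat.gcd d (N / d) * d * d' ∣ N * Nat.gcd d d' ^ 2 := by
  have hd0 : 0 < d := Nat.pos_of_dvd_of_pos hd hN
  have hd'0 : 0 < d' := Nat.pos_of_dvd_of_pos hd' hN
  have hND : 0 < N / d := Nat.div_pos (Nat.le_of_dvd hN hd) hd0
  have hg0 : 0 < Nat.gcd d (N / d) := Nat.gcd_pos_of_pos_left _ hd0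
  have hG0 : 0 < Nat.gcd d d' := Nat.gcd_pos_of_pos_left _ hd0
  have h1 : d.factorization ≤ N.factorization :=
    (Nat.factorization_le_iff_dvd hd0.ne' hN.ne').2 hd
  have h2 : d'.factorization ≤ N.factorization :=
    (Nat.factorization_le_iff_dvd hd'0.ne' hN.ne').2 hd'
  have hdiv : Nat.gcd d (N / d) * d * d' ∣ N * Nat.gcd d d' ^ 2 := by
    rw [← Nat.factorization_le_iff_dvd (by positivity) (by positivity), Finsupp.le_def]
    intro p
    have e1 : d.factorization p ≤ N.factorization p := Finsupp.le_def.mp h1 p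
    have e2 : d'.factorization p ≤ N.factorization p := Finsupp.le_def.mp h2 p
    rw [Nat.factorization_mul (Nat.mul_ne_zero hg0.ne' hd0.ne') hd'0.ne',
        Nat.factorization_mul hg0.ne' hd0.ne',
        Nat.factorization_mul hN.ne' (pow_ne_zero 2 hG0.ne'),
        Nat.factorization_pow, Nat.factorization_gcd hd0.ne' hND.ne',
        Nat.factorization_gcd hd0.ne' hd'0.ne',
        Nat.factorization_div hd]
    simp only [Finsupp.add_apply, Finsupp.inf_apply, Finsupp.tsub_apply,
      Finsupp.smul_apply, smul_eq_mul]
    omega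
  refine ⟨⟨(N * Nat.gcd d d' ^ 2) / (Nat.gcd d (N / d) * d * d'), ?_, ?_⟩, hdiv⟩
  · exact Nat.div_pos (Nat.le_of_dvd (by positivity) hdiv) (by positivity)
  · have := Nat.div_mul_cancel hdiv
    have hcast : (((N * Nat.gcd d d' ^ 2) / (Nat.gcd d (N / d) * d * d') : ℕ) : ℚ) *
        ((Nat.gcd d (N / d) : ℚ) * d * d') = (N : ℚ) * (Nat.gcd d d' : ℚ) ^ 2 := by
      exact_mod_cast congrArg (Nat.cast : ℕ → ℚ) this
    have hgq : (Nat.gcd d (N / d) : ℚ) ≠ 0 := by exact_mod_cast hg0.ne'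
    have hdq : (d : ℚ) ≠ 0 := by exact_mod_cast hd0.ne'
    have hd'q : (d' : ℚ) ≠ 0 := by exact_mod_cast hd'0.ne'
    field_simp
    linarith [hcast]
end

section
/- Let N be a positive integer and d' a fixed positive divisor of N. Then Σ_{d | N} φ(gcd(d, N/d)) · (N/gcd(d, N/d)) · gcd(d,d')^2/(d·d') = (N/rad(N)) · Π_{p | N, p prime} (p+1), where φ is Euler's totient function and rad(N) is the product of the distinct primes dividing N. (Both sums and products range over positive divisors d of N and primes p dividing N respectively.) -/
open Finset

lemma gcd_pow_pow (p a b : ℕ) : Nat.gcd (p ^ a) (p ^ b) = p ^ (min a b) := by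
  rcases le_total a b with h | h
  · rw [min_eq_left h, Nat.gcd_eq_left (pow_dvd_pow p h)]
  · rw [min_eq_right h, Nat.gcd_eq_right (pow_dvd_pow p h)]

lemma key_pp {p : ℕ} (hp : p.Prime) {k j : ℕ} (hk : 1 ≤ k) (hj : j ≤ k) :
    ∑ i ∈ range (k + 1),
      ((Nat.totient (p ^ min i (k - i)) : ℚ) * (p : ℚ) ^ (k - min i (k - i)) *
        (p : ℚ) ^ (2 * min i j) * (p : ℚ) ^ (k - i))
    = (p : ℚ) ^ (2 * k + j) + (p : ℚ) ^ (2 * k + j - 1) := by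
  obtain ⟨K, rfl⟩ : ∃ K, k = K + 1 := ⟨k - 1, by omega⟩
  set q : ℚ := (p : ℚ) with hq
  have interior : ∀ i ∈ range K,
      (Nat.totient (p ^ min (i+1) (K + 1 - (i+1))) : ℚ) * q ^ (K + 1 - min (i+1) (K+1-(i+1))) *
        q ^ (2 * min (i+1) j) * q ^ (K + 1 - (i+1))
      = (q - 1) * q ^ (2 * K + 2 * min (i+1) j - i) := by
    intro i hi
    rw [mem_range] at hi
    set m := min (i+1) (K + 1 - (i+1)) with hm
    have hm1 : 1 ≤ m := by omega
    rw [Nat.totient_prime_pow hp hm1]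
    push_cast [Nat.cast_sub hp.one_le]
    rw [show 2 * K + 2 * min (i+1) j - i
        = (m - 1) + ((K + 1 - m) + (2 * min (i+1) j + (K - i))) from by omega,
      pow_add, pow_add, pow_add]
    ring
  rw [Finset.sum_range_succ', Finset.sum_range_succ, Finset.sum_congr rfl interior]
  have h0 : (Nat.totient (p ^ min 0 (K + 1 - 0)) : ℚ) * q ^ (K + 1 - min 0 (K+1-0)) *
      q ^ (2 * min 0 j) * q ^ (K + 1 - 0) = q ^ (2 * K + 2) := by
    rw [show min 0 (K + 1 - 0) = 0 from by omega, show min 0 j = 0 from by omega]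
    simp [← pow_add]
    congr 1
    omega
  have hKterm : (Nat.totient (p ^ min (K+1) (K + 1 - (K+1))) : ℚ) *
      q ^ (K + 1 - min (K+1) (K+1-(K+1))) * q ^ (2 * min (K+1) j) * q ^ (K + 1 - (K+1)) =
      q ^ (K + 1 + 2 * j) := by
    rw [show min (K+1) (K + 1 - (K+1)) = 0 from by omega, show min (K+1) j = j from by omega,
      show K + 1 - (K + 1) = 0 from by omega, show K + 1 - 0 = K + 1 from rfl]
    simp [← pow_add]
  rw [h0, hKterm]
  have tel : ∀ a n : ℕ, ∑ i ∈ range n, (q - 1) * q ^ (a + i) = q ^ (a + n) - q ^ a := by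
    intro a n
    have h := Finset.sum_range_sub (fun i => q ^ (a + i)) n
    simp only [Nat.add_zero] at h
    rw [← h]
    refine Finset.sum_congr rfl fun i _ => ?_
    rw [show a + (i + 1) = (a + i) + 1 from by omega, pow_succ]
    ring
  rcases eq_or_lt_of_le hj with hjk | hjK
  · -- j = K + 1
    subst hjk
    have step : ∀ i ∈ range K, (q - 1) * q ^ (2 * K + 2 * min (i+1) (K+1) - i)
        = (q - 1) * q ^ (2 * K + 2 + i) := by
      intro i hi
      rw [mem_range] at hi
      rw [show 2 * K + 2 * min (i+1) (K+1) - i = 2 * K + 2 + i from by omega]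
    rw [Finset.sum_congr rfl step, tel (2 * K + 2) K]
    rw [show K + 1 + 2 * (K + 1) = 2 * K + 2 + (K + 1) from by omega,
      show 2 * (K + 1) + (K + 1) = 2 * K + 2 + (K + 1) from by omega,
      show 2 * K + 2 + (K + 1) - 1 = 2 * K + 2 + K from by omega]
    ring
  · -- j ≤ K
    have hjK' : j ≤ K := by omega
    rw [← Finset.sum_range_add_sum_Ico _ hjK']
    have part1 : ∑ i ∈ range j, (q - 1) * q ^ (2 * K + 2 * min (i+1) j - i)
        = q ^ (2 * K + 2 + j) - q ^ (2 * K + 2) := by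
      rw [← tel (2 * K + 2) j]
      refine Finset.sum_congr rfl fun i hi => ?_
      rw [mem_range] at hi
      rw [show 2 * K + 2 * min (i+1) j - i = 2 * K + 2 + i from by omega]
    have part2 : ∑ i ∈ Finset.Ico j K, (q - 1) * q ^ (2 * K + 2 * min (i+1) j - i)
        = q ^ (2 * K + 1 + j) - q ^ (K + 1 + 2 * j) := by
      rw [Finset.sum_Ico_eq_sum_range, ← Finset.sum_range_reflect]
      have step : ∀ i ∈ range (K - j),
          (q - 1) * q ^ (2 * K + 2 * min (j + (K - j - 1 - i) + 1) j - (j + (K - j - 1 - i)))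
          = (q - 1) * q ^ ((K + 1 + 2 * j) + i) := by
        intro i hi
        rw [mem_range] at hi
        rw [show 2 * K + 2 * min (j + (K - j - 1 - i) + 1) j - (j + (K - j - 1 - i))
            = (K + 1 + 2 * j) + i from by omega]
      rw [Finset.sum_congr rfl step, tel (K + 1 + 2 * j) (K - j),
        show K + 1 + 2 * j + (K - j) = 2 * K + 1 + j from by omega]
    rw [part1, part2,
      show 2 * (K + 1) + j = 2 * K + 2 + j from by omega,
      show 2 * K + 2 + j - 1 = 2 * K + 1 + j from by omega]
    ring
noncomputable def tm (n e d : ℕ) : ℚ :=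
  (Nat.totient (Nat.gcd d (n / d)) : ℚ) *
    (((n : ℚ) / (Nat.gcd d (n / d) : ℚ)) *
      ((Nat.gcd d e : ℚ) ^ 2 / ((d : ℚ) * (e : ℚ))))

noncomputable def Fc (n e : ℕ) : ℚ := ∑ d ∈ n.divisors, tm n e d

noncomputable def Rc (n : ℕ) : ℚ :=
  ((n : ℚ) / ∏ p ∈ n.primeFactors, (p : ℚ)) * ∏ p ∈ n.primeFactors, ((p : ℚ) + 1)

lemma Rc_mul {a b : ℕ} (hab : a.Coprime b) : Rc (a * b) = Rc a * Rc b := by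
  rw [Rc, Rc, Rc, hab.primeFactors_mul,
    Finset.prod_union hab.disjoint_primeFactors,
    Finset.prod_union hab.disjoint_primeFactors]
  push_cast
  ring

lemma tm_mul {a b d1 d2 e1 e2 : ℕ} (hab : a.Coprime b)
    (hd1 : d1 ∣ a) (hd2 : d2 ∣ b) (he1 : e1 ∣ a) (he2 : e2 ∣ b) :
    tm (a * b) (e1 * e2) (d1 * d2) = tm a e1 d1 * tm b e2 d2 := by
  have cop : ∀ {x y : ℕ}, x ∣ a → y ∣ b → x.Coprime y := fun hx hy =>
    Nat.Coprime.coprime_dvd_left hx (hab.coprime_dvd_right hy)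
  have hda : a / d1 ∣ a := Nat.div_dvd_of_dvd hd1
  have hdb : b / d2 ∣ b := Nat.div_dvd_of_dvd hd2
  have h1 : a * b / (d1 * d2) = a / d1 * (b / d2) := (Nat.div_mul_div_comm hd1 hd2).symm
  have hg : (d1 * d2).gcd (a / d1 * (b / d2)) = d1.gcd (a / d1) * d2.gcd (b / d2) := by
    rw [Nat.Coprime.gcd_mul _ (cop hda hdb),
      Nat.Coprime.gcd_mul_right_cancel d1 (cop hda hd2).symm,
      Nat.Coprime.gcd_mul_left_cancel d2 (cop hd1 hdb)]
  have hge : (d1 * d2).gcd (e1 * e2) = d1.gcd e1 * d2.gcd e2 := by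
    rw [Nat.Coprime.gcd_mul _ (cop he1 he2),
      Nat.Coprime.gcd_mul_right_cancel d1 (cop he1 hd2).symm,
      Nat.Coprime.gcd_mul_left_cancel d2 (cop hd1 he2)]
  have htot : Nat.totient (d1.gcd (a / d1) * d2.gcd (b / d2)) =
      Nat.totient (d1.gcd (a / d1)) * Nat.totient (d2.gcd (b / d2)) :=
    Nat.totient_mul (cop ((Nat.gcd_dvd_left _ _).trans hd1) ((Nat.gcd_dvd_left _ _).trans hd2))
  rw [tm, tm, tm, h1, hg, hge, htot]
  push_cast
  ring

lemma F_mul {a b : ℕ} (ha : 0 < a) (hb : 0 < b) (hab : a.Coprime b) {e : ℕ} (he : e ∣ a * b) :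
    Fc (a * b) e = Fc a (e.gcd a) * Fc b (e.gcd b) := by
  have cop : ∀ {x y : ℕ}, x ∣ a → y ∣ b → x.Coprime y := fun hx hy =>
    Nat.Coprime.coprime_dvd_left hx (hab.coprime_dvd_right hy)
  have he12 : e.gcd a * e.gcd b = e := (Nat.gcd_mul_gcd_eq_iff_dvd_mul_of_coprime hab).mpr he
  rw [Fc, Fc, Fc, Finset.sum_mul_sum, ← Finset.sum_product']
  refine Finset.sum_nbij' (fun d => (d.gcd a, d.gcd b)) (fun x => x.1 * x.2) ?_ ?_ ?_ ?_ ?_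
  · intro d hd
    rw [Nat.mem_divisors] at hd
    rw [Finset.mem_product]
    exact ⟨Nat.mem_divisors.mpr ⟨Nat.gcd_dvd_right d a, ha.ne'⟩,
      Nat.mem_divisors.mpr ⟨Nat.gcd_dvd_right d b, hb.ne'⟩⟩
  · intro x hx
    rw [Finset.mem_product, Nat.mem_divisors, Nat.mem_divisors] at hx
    exact Nat.mem_divisors.mpr ⟨mul_dvd_mul hx.1.1 hx.2.1, (mul_pos ha hb).ne'⟩
  · intro d hd
    rw [Nat.mem_divisors] at hd
    exact (Nat.gcd_mul_gcd_eq_iff_dvd_mul_of_coprime hab).mpr hd.1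
  · intro x hx
    rw [Finset.mem_product, Nat.mem_divisors, Nat.mem_divisors] at hx
    have h1 : (x.1 * x.2).gcd a = x.1 := by
      rw [Nat.Coprime.gcd_mul_right_cancel x.1 (Nat.Coprime.coprime_dvd_left hx.2.1 hab.symm),
        Nat.gcd_eq_left hx.1.1]
    have h2 : (x.1 * x.2).gcd b = x.2 := by
      rw [Nat.Coprime.gcd_mul_left_cancel x.2 (Nat.Coprime.coprime_dvd_left hx.1.1 hab),
        Nat.gcd_eq_left hx.2.1]
    simp [h1, h2]
  · intro d hd
    rw [Nat.mem_divisors] at hd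
    have hd1 : d.gcd a ∣ a := Nat.gcd_dvd_right d a
    have hd2 : d.gcd b ∣ b := Nat.gcd_dvd_right d b
    have hdd : d.gcd a * d.gcd b = d := (Nat.gcd_mul_gcd_eq_iff_dvd_mul_of_coprime hab).mpr hd.1
    calc tm (a * b) e d = tm (a * b) (e.gcd a * e.gcd b) (d.gcd a * d.gcd b) := by rw [he12, hdd]
    _ = tm a (e.gcd a) (d.gcd a) * tm b (e.gcd b) (d.gcd b) :=
        tm_mul hab hd1 hd2 (Nat.gcd_dvd_right e a) (Nat.gcd_dvd_right e b)

lemma F_pp (p n : ℕ) (hp : p.Prime) (hn : 0 < n) {e : ℕ} (he : e ∣ p ^ n) :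
    Fc (p ^ n) e = Rc (p ^ n) := by
  obtain ⟨j, hj, rfl⟩ := (Nat.dvd_prime_pow hp).mp he
  set q : ℚ := (p : ℚ) with hq
  have hq0 : q ≠ 0 := Nat.cast_ne_zero.mpr hp.pos.ne'
  rw [Fc, Nat.sum_divisors_prime_pow hp]
  simp only [tm]
  have congr1 : ∀ i ∈ range (n + 1),
      (Nat.totient (Nat.gcd (p ^ i) (p ^ n / p ^ i)) : ℚ) *
        (((p ^ n : ℕ) : ℚ) / (Nat.gcd (p ^ i) (p ^ n / p ^ i) : ℚ) *
          ((Nat.gcd (p ^ i) (p ^ j) : ℚ) ^ 2 / (((p ^ i : ℕ) : ℚ) * ((p ^ j : ℕ) : ℚ))))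
      = ((Nat.totient (p ^ min i (n - i)) : ℚ) * q ^ (n - min i (n - i)) *
          q ^ (2 * min i j) * q ^ (n - i)) / q ^ (n + j) := by
    intro i hi
    rw [mem_range] at hi
    have hin : i ≤ n := by omega
    rw [Nat.pow_div hin hp.pos, gcd_pow_pow, gcd_pow_pow]
    set m := min i (n - i) with hm
    have hmn : m ≤ n := by omega
    set T : ℚ := (Nat.totient (p ^ m) : ℚ)
    push_cast
    rw [eq_div_iff (pow_ne_zero _ hq0)]
    field_simp
    rw [← pow_mul]
    simp only [mul_assoc, ← pow_add]
    congr 1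
    rw [hq, ← pow_add, show n + min i j * 2 + (n + j) = n - m + 2 * min i j + (n - i) + (m + i + j) from by omega, pow_add (p : ℚ) (n - m + 2 * min i j + (n - i)) (m + i + j), mul_div_assoc, mul_div_cancel_right₀ _ (pow_ne_zero _ hq0)]
  rw [Finset.sum_congr rfl congr1, ← Finset.sum_div, key_pp hp hn hj]
  rw [Rc, Nat.primeFactors_pow p hn.ne', hp.primeFactors, Finset.prod_singleton,
    Finset.prod_singleton]
  push_cast
  have e4 : (q : ℚ) ^ n / q = q ^ (n - 1) := by
    rw [pow_sub₀ q hq0 hn, pow_one, div_eq_mul_inv]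
  rw [div_eq_iff (pow_ne_zero _ hq0), e4,
    show (2 : ℕ) * n + j - 1 = (n - 1) + (n + j) from by omega,
    show (2 : ℕ) * n + j = (n - 1) + (n + j) + 1 from by omega, pow_succ, pow_add]
  ring

lemma main_lemma : ∀ N e : ℕ, 0 < N → e ∣ N → Fc N e = Rc N := by
  intro N
  induction N using Nat.recOnPosPrimePosCoprime with
  | prime_pow p n hp hn => exact fun e _ he => F_pp p n hp hn he
  | zero => exact fun e h => absurd h (lt_irrefl 0)
  | one =>
    intro e _ he
    obtain rfl := Nat.dvd_one.mp he
    simp [Fc, Rc, tm, Nat.divisors_one]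
  | coprime a b ha1 hb1 hab Ha Hb =>
    intro e hpos he
    have ha : 0 < a := by omega
    have hb : 0 < b := by omega
    rw [F_mul ha hb hab he, Rc_mul hab,
      Ha (e.gcd a) ha (Nat.gcd_dvd_right e a), Hb (e.gcd b) hb (Nat.gcd_dvd_right e b)]

/-- The total order of vanishing of `Δ(d'z)` on `X₀(N)` summed over all cusps equals
the index `[SL₂(ℤ) : Γ₀(N)] = (N/rad N)·Π_{p|N}(p+1)`. -/
theorem stmt_1 (N d' : ℕ) (hN : 0 < N) (hd' : d' ∣ N) :
    ∑ d ∈ N.divisors,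
      (Nat.totient (Nat.gcd d (N / d)) : ℚ) *
        (((N : ℚ) / (Nat.gcd d (N / d) : ℚ)) *
          ((Nat.gcd d d' : ℚ) ^ 2 / ((d : ℚ) * (d' : ℚ)))) =
    ((N : ℚ) / (∏ p ∈ N.primeFactors, (p : ℚ))) * ∏ p ∈ N.primeFactors, ((p : ℚ) + 1) := by
  have h := main_lemma N d' hN hd'
  rw [Fc] at h
  simp only [tm] at h
  rw [h, Rc]
end

section
/- Let N be a positive integer with σ_0(N) positive divisors. The σ_0(N) × σ_0(N) rational matrix Λ(N) whose rows and columns are indexed by the positive divisors of N, with (d,d')-entry equal to (1/24)·(N/gcd(d, N/d))·gcd(d,d')^2/(d·d'), is invertible over ℚ. -/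
open Finset ArithmeticFunction

noncomputable def gJ (e : ℕ) : ℚ :=
  ∑ k ∈ e.divisors, (ArithmeticFunction.moebius k : ℚ) * ((e / k : ℕ) : ℚ) ^ 2

lemma sum_inv_sq_le (n : ℕ) (hn : 1 ≤ n) :
    ∑ k ∈ Finset.Icc 2 n, (1 / (k : ℚ) ^ 2) ≤ 1 - 1 / (n : ℚ) := by
  induction n with
  | zero => omega
  | succ m ih =>
    rcases Nat.lt_or_ge m 1 with hm | hm
    · interval_cases m
      · simp
    · rw [Finset.sum_Icc_succ_top (by omega)]
      have hm0 : (0:ℚ) < m := by exact_mod_cast hm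
      have key : 1 / ((m+1:ℕ) : ℚ)^2 ≤ 1 / (m:ℚ) - 1 / ((m+1:ℕ):ℚ) := by
        rw [div_sub_div _ _ (ne_of_gt hm0) (by positivity)]
        rw [div_le_div_iff₀ (by positivity) (by positivity)]
        push_cast
        nlinarith [hm0]
      have := ih hm
      push_cast
      push_cast at key this
      linarith

lemma gJ_pos {e : ℕ} (he : 0 < e) : 0 < gJ e := by
  have h1 : (1:ℕ) ∈ e.divisors := Nat.one_mem_divisors.2 he.ne'
  rw [gJ, ← Finset.add_sum_erase _ _ h1]
  simp only [ArithmeticFunction.moebius_apply_one, Nat.div_one, Int.cast_one, one_mul]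
  have hbound : ∀ k ∈ e.divisors.erase 1,
      -( (e:ℚ)^2 * (1 / (k:ℚ)^2)) ≤ (ArithmeticFunction.moebius k : ℚ) * ((e / k : ℕ) : ℚ) ^ 2 := by
    intro k hk
    have hk' := Finset.mem_of_mem_erase hk
    have hkd : k ∣ e := (Nat.mem_divisors.1 hk').1
    have hkpos : 0 < k := Nat.pos_of_mem_divisors hk'
    have hcast : ((e / k : ℕ) : ℚ) = (e:ℚ) / k := by
      rw [Nat.cast_div hkd (by exact_mod_cast hkpos.ne')]
    have hmu : ((ArithmeticFunction.moebius k : ℤ) : ℚ) ≥ -1 := by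
      rcases ArithmeticFunction.moebius_eq_or k with h | h | h <;> simp [h]
    have hsq : ((e / k : ℕ) : ℚ)^2 = (e:ℚ)^2 * (1 / (k:ℚ)^2) := by
      rw [hcast]; field_simp
    rw [hsq]
    have hnn : (0:ℚ) ≤ (e:ℚ)^2 * (1/(k:ℚ)^2) := by positivity
    nlinarith [hmu, hnn]
  have hsub : e.divisors.erase 1 ⊆ Finset.Icc 2 e := by
    intro k hk
    have hk' := Finset.mem_of_mem_erase hk
    have := Nat.pos_of_mem_divisors hk'
    have := Nat.le_of_dvd he (Nat.mem_divisors.1 hk').1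
    have := Finset.ne_of_mem_erase hk
    simp only [Finset.mem_Icc]; omega
  have h2 : ∑ k ∈ e.divisors.erase 1, (ArithmeticFunction.moebius k : ℚ) * ((e / k : ℕ) : ℚ) ^ 2
      ≥ -∑ k ∈ Finset.Icc 2 e, (e:ℚ)^2 * (1 / (k:ℚ)^2) := by
    have hs : ∑ k ∈ e.divisors.erase 1, -((e:ℚ)^2 * (1 / (k:ℚ)^2))
        ≤ ∑ k ∈ e.divisors.erase 1, (ArithmeticFunction.moebius k : ℚ) * ((e / k : ℕ) : ℚ) ^ 2 :=
      Finset.sum_le_sum hbound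
    have h3 : ∑ k ∈ e.divisors.erase 1, ((e:ℚ)^2 * (1 / (k:ℚ)^2))
        ≤ ∑ k ∈ Finset.Icc 2 e, (e:ℚ)^2 * (1 / (k:ℚ)^2) := by
      apply Finset.sum_le_sum_of_subset_of_nonneg hsub
      intro i _ _; positivity
    rw [Finset.sum_neg_distrib] at hs
    linarith
  have h4 : ∑ k ∈ Finset.Icc 2 e, (e:ℚ)^2 * (1 / (k:ℚ)^2) ≤ (e:ℚ)^2 * (1 - 1/(e:ℚ)) := by
    rw [← Finset.mul_sum]
    exact mul_le_mul_of_nonneg_left (sum_inv_sq_le e he) (by positivity)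
  have hepos : (0:ℚ) < e := by exact_mod_cast he
  have : (e:ℚ)^2 * (1 - 1/(e:ℚ)) = (e:ℚ)^2 - e := by field_simp
  nlinarith

lemma sum_gJ {n : ℕ} (hn : 0 < n) : ∑ e ∈ n.divisors, gJ e = (n:ℚ)^2 := by
  classical
  set F : ArithmeticFunction ℚ := ⟨fun n => (n:ℚ)^2, by simp⟩ with hF
  have hg : ∀ e, gJ e
      = (((ArithmeticFunction.moebius : ArithmeticFunction ℤ) : ArithmeticFunction ℚ) * F) e := by
    intro e
    rw [ArithmeticFunction.mul_apply, gJ, ← Nat.sum_divisorsAntidiagonal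
      (fun a b => (ArithmeticFunction.moebius a : ℚ) * ((b : ℕ) : ℚ) ^ 2)]
    rfl
  have : ∑ e ∈ n.divisors, gJ e
      = ((ArithmeticFunction.zeta : ArithmeticFunction ℕ) * ((ArithmeticFunction.moebius : ArithmeticFunction ℤ) * F) : ArithmeticFunction ℚ) n := by
    rw [ArithmeticFunction.coe_zeta_mul_apply]
    exact Finset.sum_congr rfl fun e _ => hg e
  rw [this, ← mul_assoc, ArithmeticFunction.coe_zeta_mul_coe_moebius, one_mul]
  rfl

open Matrix in
/-- Ligozat's matrix `Λ(N)`, with `(d,d')`-entry `a_N(d,d')/24`, indexed by the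
positive divisors of `N`, is invertible over `ℚ`. -/
theorem stmt_3 (N : ℕ) (hN : 0 < N) :
    IsUnit (Matrix.det (fun (d d' : {m : ℕ // m ∈ N.divisors}) =>
      (1 / 24 : ℚ) * (((N : ℚ) / (Nat.gcd (d : ℕ) (N / (d : ℕ)) : ℚ)) *
        ((Nat.gcd (d : ℕ) (d' : ℕ) : ℚ) ^ 2 / (((d : ℕ) : ℚ) * ((d' : ℕ) : ℚ)))))) := by
  classical
  set ι := {m : ℕ // m ∈ N.divisors}
  have hpos : ∀ d : ι, 0 < (d : ℕ) := fun d => Nat.pos_of_mem_divisors d.2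
  have hdvd : ∀ d : ι, (d : ℕ) ∣ N := fun d => (Nat.mem_divisors.1 d.2).1
  set A : Matrix ι ι ℚ := Matrix.of (fun d e : ι => if (e:ℕ) ∣ (d:ℕ) then (1:ℚ) else 0) with hA
  have hdetA : A.det = 1 := by
    rw [Matrix.det_of_lowerTriangular A ?_]
    · simp [hA]
    · intro i j hij
      have hij' : (i:ℕ) < (j:ℕ) := by exact_mod_cast hij
      have : ¬ (j:ℕ) ∣ (i:ℕ) := fun h => absurd (Nat.le_of_dvd (hpos i) h) (by omega)
      simp [hA, this]
  set S : Matrix ι ι ℚ := A * Matrix.diagonal (fun e : ι => gJ (e:ℕ)) * Aᵀ with hSdef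
  have hS : ∀ d d' : ι, S d d' = ((Nat.gcd (d:ℕ) (d':ℕ) : ℕ) : ℚ)^2 := by
    intro d d'
    have hgcd_dvd : Nat.gcd (d:ℕ) (d':ℕ) ∣ N := (Nat.gcd_dvd_left _ _).trans (hdvd d)
    have hgcd_pos : 0 < Nat.gcd (d:ℕ) (d':ℕ) := Nat.gcd_pos_of_pos_left _ (hpos d)
    rw [hSdef, Matrix.mul_apply]
    simp only [Matrix.mul_diagonal, Matrix.transpose_apply, hA, Matrix.of_apply]
    have hterm : ∀ e : ι, (if (e:ℕ) ∣ (d:ℕ) then (1:ℚ) else 0) * gJ (e:ℕ) *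
        (if (e:ℕ) ∣ (d':ℕ) then (1:ℚ) else 0)
        = if (e:ℕ) ∣ Nat.gcd (d:ℕ) (d':ℕ) then gJ (e:ℕ) else 0 := by
      intro e
      by_cases h1 : (e:ℕ) ∣ (d:ℕ) <;> by_cases h2 : (e:ℕ) ∣ (d':ℕ) <;>
        simp [h1, h2, Nat.dvd_gcd_iff, Nat.dvd_gcd]
    simp only [hterm]
    rw [Finset.sum_coe_sort N.divisors
      (fun e => if e ∣ Nat.gcd (d:ℕ) (d':ℕ) then gJ e else 0)]
    rw [← Finset.sum_filter, Nat.divisors_filter_dvd_of_dvd hN.ne' hgcd_dvd,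
      sum_gJ hgcd_pos]
  have hdetS : S.det ≠ 0 := by
    have : S.det = ∏ e : ι, gJ (e:ℕ) := by
      rw [hSdef, Matrix.det_mul, Matrix.det_mul, Matrix.det_transpose, hdetA,
        Matrix.det_diagonal]
      ring
    rw [this]
    exact Finset.prod_ne_zero_iff.2 fun e _ => (gJ_pos (hpos e)).ne'
  set c : ι → ℚ := fun d => (1/24 : ℚ) * ((N : ℚ) / (Nat.gcd (d:ℕ) (N / (d:ℕ)) : ℚ)) / (d:ℕ)
    with hc
  set c' : ι → ℚ := fun d => 1 / ((d:ℕ) : ℚ) with hc'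
  have hM : (fun (d d' : ι) =>
      (1 / 24 : ℚ) * (((N : ℚ) / (Nat.gcd (d : ℕ) (N / (d : ℕ)) : ℚ)) *
        ((Nat.gcd (d : ℕ) (d' : ℕ) : ℚ) ^ 2 / (((d : ℕ) : ℚ) * ((d' : ℕ) : ℚ)))))
      = Matrix.diagonal c * S * Matrix.diagonal c' := by
    funext d d'
    show _ = (Matrix.diagonal c * S * Matrix.diagonal c') d d'
    rw [Matrix.mul_diagonal, Matrix.diagonal_mul, hS d d', hc, hc']
    push_cast
    ring
  rw [hM, Matrix.det_mul, Matrix.det_mul, Matrix.det_diagonal, Matrix.det_diagonal]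
  rw [isUnit_iff_ne_zero]
  have hc0 : ∀ d : ι, c d ≠ 0 := by
    intro d
    have h1 : (0:ℚ) < (N:ℚ) := by exact_mod_cast hN
    have h2 : 0 < Nat.gcd (d:ℕ) (N / (d:ℕ)) := Nat.gcd_pos_of_pos_left _ (hpos d)
    have h3 : (0:ℚ) < (Nat.gcd (d:ℕ) (N / (d:ℕ)) : ℚ) := by exact_mod_cast h2
    have h4 : (0:ℚ) < ((d:ℕ) : ℚ) := by exact_mod_cast hpos d
    rw [hc]
    positivity
  have hc'0 : ∀ d : ι, c' d ≠ 0 := by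
    intro d
    have h4 : (0:ℚ) < ((d:ℕ) : ℚ) := by exact_mod_cast hpos d
    rw [hc']
    positivity
  exact mul_ne_zero (mul_ne_zero (Finset.prod_ne_zero_iff.2 fun d _ => hc0 d) hdetS)
    (Finset.prod_ne_zero_iff.2 fun d _ => hc'0 d)
end
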